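/- Fix 2 ≤ m ≤ n−1 and suppose H(ψ), H(χ) ∈ Z_{n,m} are commutative. Define ψ'{i,j} = ψ(i,j) on unordered pairs (subsets of size 1 or 2) of {m+1,…,n}, and similarly χ'. Then H(ψ) and H(χ) are isomorphic if and only if there exist σ ∈ S_{{m+1,…,n}} and τ ∈ S_m fixing 1 such that χ'({i^σ, j^σ})^τ = ψ'({i,j}) for all i, j ∈ {m+1,…,n}. -/

import Mathlib

set_option maxHeartbeats 1000000


/-- For commutative H(ψ), H(χ) ∈ Z_{n,m}, with ψ', χ' the induced functions on unordered
pairs of A = {m+1,…,n}: the semigroups are isomorphic iff there are σ ∈ S_A and τ ∈ S_m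
fixing the zero with χ'({σi, σj})^τ = ψ'({i,j}) for all i, j ∈ A. -/
theorem stmt17 (n m : ℕ) (hm2 : 2 ≤ m) (hmn : m ≤ n - 1)
    (ψ χ : {x : Fin n // m ≤ x.val} → {x : Fin n // m ≤ x.val} → Fin m)
    (hψ : ∀ b : Fin m, b.val ≠ 0 → ∃ x y, ψ x y = b)
    (hχ : ∀ b : Fin m, b.val ≠ 0 → ∃ x y, χ x y = b)
    (hcψ : ∀ x y, ψ x y = ψ y x) (hcχ : ∀ x y, χ x y = χ y x)
    (ψ' χ' : Sym2 {x : Fin n // m ≤ x.val} → Fin m)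
    (hψ' : ∀ i j, ψ' (s(i, j)) = ψ i j)
    (hχ' : ∀ i j, χ' (s(i, j)) = χ i j)
    (mulψ mulχ : Fin n → Fin n → Fin n)
    (hmulψ : ∀ x y, mulψ x y =
      if h : m ≤ x.val ∧ m ≤ y.val then
        Fin.castLE (by omega) (ψ ⟨x, h.1⟩ ⟨y, h.2⟩) else ⟨0, by omega⟩)
    (hmulχ : ∀ x y, mulχ x y =
      if h : m ≤ x.val ∧ m ≤ y.val then
        Fin.castLE (by omega) (χ ⟨x, h.1⟩ ⟨y, h.2⟩) else ⟨0, by omega⟩) :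
    (∃ π : Equiv.Perm (Fin n), ∀ x y, π (mulψ x y) = mulχ (π x) (π y)) ↔
    (∃ (σ : Equiv.Perm {x : Fin n // m ≤ x.val}) (τ : Equiv.Perm (Fin m)),
      (τ ⟨0, by omega⟩).val = 0 ∧
      ∀ i j, τ (χ' (s(σ i, σ j))) = ψ' (s(i, j))) := by
  have hn : m < n := by omega
  have h0n : 0 < n := by omega
  constructor
  · rintro ⟨π, hπ⟩
    have hχlow : ∀ a b, (mulχ a b).val < m := by
      intro a b
      rw [hmulχ]
      split
      · exact (χ _ _).isLt
      · show (0:ℕ) < m; omega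
    -- π maps low to low
    have key : ∀ x : Fin n, x.val < m → (π x).val < m := by
      intro x hx
      have hrange : ∃ a b, mulψ a b = x := by
        by_cases hx0 : x.val = 0
        · refine ⟨⟨0, h0n⟩, ⟨0, h0n⟩, ?_⟩
          rw [hmulψ, dif_neg (by show ¬(m ≤ 0 ∧ m ≤ 0); omega)]
          exact Fin.ext (by show 0 = x.val; omega)
        · obtain ⟨a, b, hab⟩ := hψ ⟨x.val, hx⟩ hx0
          refine ⟨a.1, b.1, ?_⟩
          rw [hmulψ, dif_pos ⟨a.2, b.2⟩]
          apply Fin.ext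
          simp only [Fin.coe_castLE]
          have : ψ ⟨a.1, a.2⟩ ⟨b.1, b.2⟩ = ψ a b := rfl
          rw [this, hab]
      obtain ⟨a, b, rfl⟩ := hrange
      rw [hπ]
      exact hχlow _ _
    -- π maps high to high
    have keyhigh : ∀ x : Fin n, m ≤ x.val → m ≤ (π x).val := by
      intro x hx
      by_contra hcon
      push_neg at hcon
      have hS : (Finset.univ.filter (fun z : Fin n => z.val < m)).image π =
          Finset.univ.filter (fun z : Fin n => z.val < m) := by
        apply Finset.eq_of_subset_of_card_le
        · intro z hz
          simp only [Finset.mem_image, Finset.mem_filter, Finset.mem_univ, true_and] at hz ⊢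
          obtain ⟨y, hy, rfl⟩ := hz
          exact key y hy
        · rw [Finset.card_image_of_injective _ π.injective]
      have hmem : π x ∈ (Finset.univ.filter (fun z : Fin n => z.val < m)).image π := by
        rw [hS]
        simp [hcon]
      simp only [Finset.mem_image, Finset.mem_filter, Finset.mem_univ, true_and] at hmem
      obtain ⟨y, hy, hyx⟩ := hmem
      have := π.injective hyx
      omega
    have keysymm : ∀ x : Fin n, x.val < m → (π.symm x).val < m := by
      intro x hx
      by_contra hcon
      push_neg at hcon
      have := keyhigh _ hcon
      rw [Equiv.apply_symm_apply] at this
      omega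
    -- π fixes 0
    have hπ0 : π ⟨0, h0n⟩ = ⟨0, h0n⟩ := by
      have h1 : mulψ ⟨0, h0n⟩ ⟨0, h0n⟩ = ⟨0, h0n⟩ := by
        rw [hmulψ, dif_neg (by show ¬(m ≤ 0 ∧ m ≤ 0); omega)]
      have h2 := hπ ⟨0, h0n⟩ ⟨0, h0n⟩
      have hk := key ⟨0, h0n⟩ (show (0:ℕ) < m by omega)
      rw [h1, hmulχ, dif_neg (by intro hcc; omega)] at h2
      exact h2
    -- build σ and τ
    have hiff : ∀ x : Fin n, m ≤ x.val ↔ m ≤ (π x).val := by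
      intro x
      constructor
      · exact keyhigh x
      · intro h
        by_contra hcon
        push_neg at hcon
        have := key x hcon
        omega
    set σ : Equiv.Perm {x : Fin n // m ≤ x.val} := π.subtypePerm (fun x => (hiff x).symm) with hσdef
    have hlt : ∀ b : Fin m, (b : ℕ) < n := fun b => by omega
    let f : Fin m → Fin m := fun b => ⟨(π ⟨b.val, hlt b⟩).val, key _ b.isLt⟩
    let g : Fin m → Fin m := fun b => ⟨(π.symm ⟨b.val, hlt b⟩).val, keysymm _ b.isLt⟩
    have hfg : ∀ b, g (f b) = b := by
      intro b
      apply Fin.ext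
      simp only [f, g, Fin.eta, Equiv.symm_apply_apply]
    have hgf : ∀ b, f (g b) = b := by
      intro b
      apply Fin.ext
      simp only [f, g, Fin.eta, Equiv.apply_symm_apply]
    set τ : Equiv.Perm (Fin m) := ⟨f, g, hfg, hgf⟩ with hτdef
    have hτ0v : (τ (⟨0, by omega⟩ : Fin m)).val = 0 := by
      show (π ⟨((⟨0, by omega⟩ : Fin m)).val, hlt ⟨0, by omega⟩⟩).val = 0
      have e : (⟨((⟨0, by omega⟩ : Fin m)).val, hlt ⟨0, by omega⟩⟩ : Fin n) = ⟨0, h0n⟩ :=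
        Fin.ext rfl
      rw [e, hπ0]
    have hτ0 : τ (⟨0, by omega⟩ : Fin m) = ⟨0, by omega⟩ := Fin.ext hτ0v
    refine ⟨σ, τ.symm, ?_, ?_⟩
    · rw [← hτ0, Equiv.symm_apply_apply]
    · intro i j
      rw [hχ', hψ', Equiv.symm_apply_eq]
      -- goal : χ (σ i) (σ j) = τ (ψ i j)
      have h1 := hπ i.1 j.1
      rw [hmulψ, hmulχ, dif_pos ⟨i.2, j.2⟩,
        dif_pos ⟨keyhigh _ i.2, keyhigh _ j.2⟩] at h1
      apply Fin.ext
      have h2 := congrArg Fin.val h1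
      simp only [Fin.coe_castLE] at h2
      have e1 : ψ ⟨i.1, i.2⟩ ⟨j.1, j.2⟩ = ψ i j := rfl
      rw [e1] at h2
      have e2 : χ ⟨π i.1, keyhigh _ i.2⟩ ⟨π j.1, keyhigh _ j.2⟩ = χ (σ i) (σ j) := rfl
      rw [e2] at h2
      have e3 : (τ (ψ i j)).val = (π ⟨(ψ i j).val, hlt _⟩).val := rfl
      rw [e3]
      have e4 : (⟨(ψ i j).val, hlt _⟩ : Fin n) = Fin.castLE (by omega) (ψ i j) := rfl
      rw [e4, h2]
  · rintro ⟨σ, τ, hτ0, hcond⟩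
    have hc : ∀ i j, τ (χ (σ i) (σ j)) = ψ i j := by
      intro i j
      have := hcond i j
      rwa [hχ', hψ'] at this
    have hτ0' : τ ⟨0, by omega⟩ = ⟨0, by omega⟩ := Fin.ext hτ0
    have hτs0 : τ.symm ⟨0, by omega⟩ = ⟨0, by omega⟩ :=
      (Equiv.symm_apply_eq τ).mpr hτ0'.symm
    let f : Fin n → Fin n := fun x =>
      if h : m ≤ x.val then (σ ⟨x, h⟩).1
      else Fin.castLE (by omega) (τ.symm ⟨x.val, by omega⟩)
    let g : Fin n → Fin n := fun x =>
      if h : m ≤ x.val then (σ.symm ⟨x, h⟩).1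
      else Fin.castLE (by omega) (τ ⟨x.val, by omega⟩)
    have fhigh : ∀ (x : Fin n) (h : m ≤ x.val), f x = (σ ⟨x, h⟩).1 :=
      fun x h => dif_pos h
    have ghigh : ∀ (x : Fin n) (h : m ≤ x.val), g x = (σ.symm ⟨x, h⟩).1 :=
      fun x h => dif_pos h
    have flow : ∀ b : Fin m, f (Fin.castLE (show m ≤ n by omega) b) =
        Fin.castLE (show m ≤ n by omega) (τ.symm b) :=
      fun b => dif_neg (not_le.mpr b.isLt)
    have glow : ∀ b : Fin m, g (Fin.castLE (show m ≤ n by omega) b) =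
        Fin.castLE (show m ≤ n by omega) (τ b) :=
      fun b => dif_neg (not_le.mpr b.isLt)
    have hfg : ∀ x, g (f x) = x := by
      intro x
      by_cases h : m ≤ x.val
      · rw [fhigh x h]
        have e2 : g (σ ⟨x, h⟩).1 = (σ.symm (σ ⟨x, h⟩)).1 := dif_pos (σ ⟨x, h⟩).2
        rw [e2, σ.symm_apply_apply]
      · have e1 : f x = Fin.castLE (show m ≤ n by omega) (τ.symm ⟨x.val, by omega⟩) :=
          dif_neg h
        rw [e1]
        exact (glow (τ.symm ⟨x.val, by omega⟩)).trans
          ((congrArg (Fin.castLE (show m ≤ n by omega))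
            (τ.apply_symm_apply ⟨x.val, by omega⟩)).trans (Fin.ext rfl))
    have hgf : ∀ x, f (g x) = x := by
      intro x
      by_cases h : m ≤ x.val
      · rw [ghigh x h]
        have e2 : f (σ.symm ⟨x, h⟩).1 = (σ (σ.symm ⟨x, h⟩)).1 := dif_pos (σ.symm ⟨x, h⟩).2
        rw [e2, σ.apply_symm_apply]
      · have e1 : g x = Fin.castLE (show m ≤ n by omega) (τ ⟨x.val, by omega⟩) :=
          dif_neg h
        rw [e1]
        exact (flow (τ ⟨x.val, by omega⟩)).trans
          ((congrArg (Fin.castLE (show m ≤ n by omega))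
            (τ.symm_apply_apply ⟨x.val, by omega⟩)).trans (Fin.ext rfl))
    refine ⟨⟨f, g, hfg, hgf⟩, ?_⟩
    intro x y
    show f (mulψ x y) = mulχ (f x) (f y)
    rw [hmulψ, hmulχ]
    by_cases h : m ≤ x.val ∧ m ≤ y.val
    · rw [dif_pos h, fhigh x h.1, fhigh y h.2,
        dif_pos (⟨(σ ⟨x, h.1⟩).2, (σ ⟨y, h.2⟩).2⟩ :
          m ≤ ((σ ⟨x, h.1⟩).1 : Fin n).val ∧ m ≤ ((σ ⟨y, h.2⟩).1 : Fin n).val)]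
      have e1 : f (Fin.castLE (show m ≤ n by omega) (ψ ⟨x, h.1⟩ ⟨y, h.2⟩)) =
          Fin.castLE (show m ≤ n by omega) (τ.symm (ψ ⟨x, h.1⟩ ⟨y, h.2⟩)) :=
        flow (ψ ⟨x, h.1⟩ ⟨y, h.2⟩)
      rw [e1]
      apply Fin.ext
      simp only [Fin.coe_castLE]
      rw [← hc ⟨x, h.1⟩ ⟨y, h.2⟩, τ.symm_apply_apply]
    · rw [dif_neg h]
      have e1 : f ⟨0, h0n⟩ = Fin.castLE (show m ≤ n by omega) (τ.symm ⟨0, by omega⟩) :=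
        dif_neg (by show ¬ m ≤ 0; omega)
      have e2 : f ⟨0, h0n⟩ = ⟨0, h0n⟩ := by
        rw [e1, hτs0]
        exact Fin.ext rfl
      rw [e2, dif_neg ?_]
      intro hcc
      apply h
      have hfiff : ∀ z : Fin n, m ≤ (f z).val → m ≤ z.val := by
        intro z hz
        by_contra hzc
        have ez : f z = Fin.castLE (show m ≤ n by omega) (τ.symm ⟨z.val, by omega⟩) :=
          dif_neg hzc
        rw [ez] at hz
        exact absurd hz (not_le.mpr (τ.symm _).isLt)
      exact ⟨hfiff x hcc.1, hfiff y hcc.2⟩
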